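/- There exists a constant C > 0 such that for all ε > 0, all d ≠ 0 and all x₁ ∈ ℝ, the quantity |∫_{-1/2}^{1/2} e^{iαx₁}/(iε - dα) dα| is bounded by C·(1/|d|)·(1 + log(|x₁| + 1)) + (2/|d|)·(1 + log(|x₁|+1)); in particular |ψ_{ε}(x₁)| := |∫_{-1/2}^{1/2} e^{iαx₁}/(iε - dα) dα| ≤ C_d (1 + log(|x₁|+1)) with C_d independent of ε. -/

import Mathlib

open Real MeasureTheory Complex

lemma aux_norm_exp (θ : ℝ) : ‖Complex.exp (θ * Complex.I) - 1‖ ≤ |θ| := by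
  have h1 : Complex.exp (θ * Complex.I) - 1
      = (Real.cos θ - 1 : ℝ) + (Real.sin θ : ℝ) * Complex.I := by
    rw [Complex.exp_mul_I]; push_cast; ring
  rw [h1, Complex.norm_add_mul_I]
  rw [show |θ| = Real.sqrt (θ^2) from (Real.sqrt_sq_eq_abs θ).symm]
  apply Real.sqrt_le_sqrt
  have h2 := Real.one_sub_sq_div_two_le_cos (x := θ)
  nlinarith [Real.sin_sq_add_cos_sq θ]

lemma aux_norm_exp2 (θ : ℝ) : ‖Complex.exp (θ * Complex.I) - 1‖ ≤ 2 := by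
  calc ‖Complex.exp (θ * Complex.I) - 1‖ ≤ ‖Complex.exp (θ * Complex.I)‖ + ‖(1:ℂ)‖ :=
        norm_sub_le _ _
    _ ≤ 2 := by rw [Complex.norm_exp]; simp; norm_num

lemma aux_min (s B : ℝ) (hs : 0 ≤ s) (hB2 : B ≤ 2) (hBs : B ≤ s) : B ≤ 4*s/(1+s) := by
  rw [le_div_iff₀ (by positivity)]; nlinarith

lemma aux_A (ε d : ℝ) (hε : 0 < ε) (α : ℝ)
    (hK1 : (Complex.I*ε - d*α : ℂ) ≠ 0) (hK2 : (Complex.I*ε - d*(-α:ℝ) : ℂ) ≠ 0) :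
    ‖(1/(Complex.I*ε - d*α) + 1/(Complex.I*ε - d*(-α:ℝ)) : ℂ)‖ = 2*ε/(ε^2+d^2*α^2) := by
  have hc : (0:ℝ) < ε^2 + d^2*α^2 := by positivity
  have hc' : ((ε^2+d^2*α^2 : ℝ) : ℂ) ≠ 0 := by
    exact_mod_cast Complex.ofReal_ne_zero.mpr hc.ne'
  have heq : (1/(Complex.I*ε - d*α) + 1/(Complex.I*ε - d*(-α:ℝ)) : ℂ)
      = (((-2*ε : ℝ)):ℂ) * Complex.I / ((ε^2+d^2*α^2 : ℝ):ℂ) := by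
    rw [div_add_div _ _ hK1 hK2, div_eq_div_iff (mul_ne_zero hK1 hK2) hc']
    push_cast
    linear_combination (2*(ε:ℂ)^3*Complex.I) * Complex.I_sq
  rw [heq, norm_div, norm_mul, Complex.norm_real, Complex.norm_I, mul_one,
    Complex.norm_real, Real.norm_eq_abs, Real.norm_eq_abs,
    abs_of_pos hc, abs_of_nonpos (by linarith)]
  ring

lemma aux_h (ε d x₁ : ℝ) (hε : 0 < ε) (hd : d ≠ 0) (α β : ℝ) (hα : 0 < α) (hβ : |β| = α) :
    ‖((Complex.exp (Complex.I*β*x₁) - 1)/(Complex.I*ε - d*β) : ℂ)‖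
      ≤ 4/|d| * ((|x₁|+1)/(1+α*(|x₁|+1))) := by
  set M := |x₁|+1 with hMdef
  have hM : 1 ≤ M := by simp only [hMdef, le_add_iff_nonneg_left]; positivity
  have hs : 0 ≤ α*M := by positivity
  have hexp_eq : Complex.I*(β:ℂ)*(x₁:ℂ) = ((β*x₁ : ℝ):ℂ)*Complex.I := by push_cast; ring
  have hn1 : ‖Complex.exp (Complex.I*β*x₁) - 1‖ ≤ α*M := by
    rw [hexp_eq]
    calc ‖Complex.exp (((β*x₁:ℝ):ℂ)*Complex.I) - 1‖ ≤ |β*x₁| := aux_norm_exp _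
      _ = α*|x₁| := by rw [abs_mul, hβ]
      _ ≤ α*M := by nlinarith [abs_nonneg x₁]
  have hn2 : ‖Complex.exp (Complex.I*β*x₁) - 1‖ ≤ 2 := by rw [hexp_eq]; exact aux_norm_exp2 _
  have hnum : ‖Complex.exp (Complex.I*β*x₁) - 1‖ ≤ 4*(α*M)/(1+α*M) := aux_min _ _ hs hn2 hn1
  have hden : |d| * α ≤ ‖(Complex.I*ε - d*β : ℂ)‖ := by
    have h1 : |(Complex.I*(ε:ℂ) - (d:ℂ)*(β:ℂ)).re| ≤ ‖(Complex.I*ε - d*β : ℂ)‖ := by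
      exact Complex.abs_re_le_norm _
    have hre : (Complex.I*(ε:ℂ) - (d:ℂ)*(β:ℂ)).re = -(d*β) := by simp
    rw [hre] at h1
    calc |d| * α = |-(d*β)| := by rw [abs_neg, abs_mul, hβ]
      _ ≤ _ := h1
  have hdpos : 0 < |d| * α := by positivity
  calc ‖((Complex.exp (Complex.I*β*x₁) - 1)/(Complex.I*ε - d*β) : ℂ)‖
      = ‖(Complex.exp (Complex.I*β*x₁) - 1 : ℂ)‖/‖(Complex.I*ε - d*β : ℂ)‖ := norm_div _ _
    _ ≤ (4*(α*M)/(1+α*M))/(|d| * α) := div_le_div₀ (by positivity) hnum hdpos hden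
    _ = 4/|d| * (M/(1+α*M)) := by
        have h1 : (1:ℝ)+α*M ≠ 0 := by positivity
        field_simp

lemma aux_fold (f : ℝ → ℂ) (hf : Continuous f) :
    ∫ α in (-(1/2) : ℝ)..(1/2), f α = ∫ α in (0:ℝ)..(1/2), (f α + f (-α)) := by
  have h1 : ∫ α in (0:ℝ)..(1/2), f (-α) = ∫ α in (-(1/2):ℝ)..0, f α := by
    rw [intervalIntegral.integral_comp_neg f]; norm_num
  have h2 : ∫ α in (0:ℝ)..(1/2), (f α + f (-α))
      = (∫ α in (0:ℝ)..(1/2), f α) + ∫ α in (0:ℝ)..(1/2), f (-α) :=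
    intervalIntegral.integral_add (hf.intervalIntegrable _ _)
      ((hf.comp continuous_neg).intervalIntegrable _ _)
  rw [h2, h1, add_comm,
    intervalIntegral.integral_add_adjacent_intervals (hf.intervalIntegrable _ _)
      (hf.intervalIntegrable _ _)]

lemma aux_arctan (ε d : ℝ) (hε : 0 < ε) (hd : d ≠ 0) :
    ∫ α in (0:ℝ)..(1/2), 2*ε/(ε^2+d^2*α^2) ≤ π/|d| := by
  have hcont : Continuous fun α : ℝ => 2*ε/(ε^2+d^2*α^2) := by
    apply continuous_const.div (by continuity)
    intro α; positivity
  have hderiv : ∀ α ∈ Set.uIcc (0:ℝ) (1/2),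
      HasDerivAt (fun α : ℝ => (2/d) * Real.arctan (d/ε*α)) (2*ε/(ε^2+d^2*α^2)) α := by
    intro α _
    have h1 : HasDerivAt (fun α : ℝ => d/ε*α) (d/ε) α := by
      simpa using (hasDerivAt_id α).const_mul (d/ε)
    have h2 := (Real.hasDerivAt_arctan (d/ε*α)).comp α h1
    have h3 := h2.const_mul (2/d)
    refine h3.congr_deriv ?_
    have := hε.ne'
    field_simp
  rw [intervalIntegral.integral_eq_sub_of_hasDerivAt hderiv (hcont.intervalIntegrable _ _)]
  have harc : |Real.arctan (d/ε*(1/2))| ≤ π/2 :=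
    abs_le.mpr ⟨(Real.neg_pi_div_two_lt_arctan _).le, (Real.arctan_lt_pi_div_two _).le⟩
  calc (2/d) * Real.arctan (d/ε*(1/2)) - (2/d) * Real.arctan (d/ε*0)
      ≤ |(2/d) * Real.arctan (d/ε*(1/2)) - (2/d) * Real.arctan (d/ε*0)| := le_abs_self _
    _ = (2/|d|) * |Real.arctan (d/ε*(1/2))| := by
        rw [mul_comm (d/ε) 0, zero_mul, Real.arctan_zero, mul_zero, sub_zero, abs_mul, abs_div]
        norm_num
    _ ≤ (2/|d|) * (π/2) := by
        apply mul_le_mul_of_nonneg_left harc; positivity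
    _ = π/|d| := by ring

lemma aux_log (M : ℝ) (hM : 1 ≤ M) :
    ∫ α in (0:ℝ)..(1/2), M/(1+α*M) ≤ 1 + Real.log M := by
  have hpos : ∀ α ∈ Set.uIcc (0:ℝ) (1/2), 0 < 1 + α * M := by
    intro α hα
    rw [Set.uIcc_of_le (by norm_num)] at hα
    nlinarith [hα.1]
  have hderiv : ∀ α ∈ Set.uIcc (0:ℝ) (1/2),
      HasDerivAt (fun α : ℝ => Real.log (1+α*M)) (M/(1+α*M)) α := by
    intro α hα
    have h1 : HasDerivAt (fun α : ℝ => 1+α*M) M α := by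
      simpa using ((hasDerivAt_id α).mul_const M).const_add 1
    have h2 := (Real.hasDerivAt_log (hpos α hα).ne').comp α h1
    refine h2.congr_deriv ?_
    have := (hpos α hα).ne'
    field_simp
  have hcont : ContinuousOn (fun α : ℝ => M/(1+α*M)) (Set.uIcc (0:ℝ) (1/2)) := by
    apply ContinuousOn.div continuousOn_const (by fun_prop)
    exact fun α hα => (hpos α hα).ne'
  rw [intervalIntegral.integral_eq_sub_of_hasDerivAt hderiv hcont.intervalIntegrable]
  simp only [zero_mul, add_zero, Real.log_one, sub_zero]
  calc Real.log (1 + 1/2 * M) ≤ Real.log (2*M) := by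
        apply Real.log_le_log (by linarith) (by linarith)
    _ = Real.log 2 + Real.log M := Real.log_mul (by norm_num) (by linarith)
    _ ≤ 1 + Real.log M := by
        have := Real.log_le_sub_one_of_pos (x := 2) (by norm_num)
        linarith

/-- Uniform (in `ε`) logarithmic bound for `ψ_ε(x₁) = ∫_{-1/2}^{1/2} e^{iαx₁}/(iε - dα) dα`. -/
theorem stmt_1 :
    ∃ C > (0 : ℝ), ∀ ε : ℝ, 0 < ε → ∀ d : ℝ, d ≠ 0 → ∀ x₁ : ℝ,
      ‖∫ α in (-(1/2) : ℝ)..(1/2),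
          Complex.exp (Complex.I * α * x₁) / (Complex.I * ε - d * α)‖ ≤
        C * (1 / |d|) * (1 + Real.log (|x₁| + 1)) +
          (2 / |d|) * (1 + Real.log (|x₁| + 1)) := by
  refine ⟨12, by norm_num, ?_⟩
  intro ε hε d hd x₁
  set M := |x₁| + 1 with hMdef
  have hM : 1 ≤ M := by simp only [hMdef, le_add_iff_nonneg_left]; positivity
  have hL : 0 ≤ Real.log M := Real.log_nonneg hM
  have habs : 0 < |d| := abs_pos.mpr hd
  have hK : ∀ α : ℝ, (Complex.I * ε - d * α : ℂ) ≠ 0 := by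
    intro α h
    have := congrArg Complex.im h
    simp [Complex.ext_iff] at this
    exact hε.ne' this
  set f : ℝ → ℂ := fun α => Complex.exp (Complex.I * α * x₁) / (Complex.I * ε - d * α)
    with hfdef
  have hfc : Continuous f := by
    apply Continuous.div
    · exact Complex.continuous_exp.comp (by continuity)
    · continuity
    · exact fun α => hK α
  -- real bound functions
  set b₁ : ℝ → ℝ := fun α => 2*ε/(ε^2+d^2*α^2) with hb1def
  set b₂ : ℝ → ℝ := fun α => 8/|d| * (M/(1+α*M)) with hb2def
  have hb1c : Continuous b₁ := by
    apply continuous_const.div (by continuity)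
    intro α; positivity
  have hposM : ∀ α ∈ Set.uIcc (0:ℝ) (1/2), 0 < 1 + α * M := by
    intro α hα
    rw [Set.uIcc_of_le (by norm_num)] at hα
    nlinarith [hα.1]
  have hb2int : IntervalIntegrable b₂ volume 0 (1/2) := by
    apply ContinuousOn.intervalIntegrable
    apply ContinuousOn.mul continuousOn_const
    apply ContinuousOn.div continuousOn_const (by fun_prop)
    exact fun α hα => (hposM α hα).ne'
  have hb1int : IntervalIntegrable b₁ volume 0 (1/2) := hb1c.intervalIntegrable _ _
  have hbint : IntervalIntegrable (fun α => b₁ α + b₂ α) volume 0 (1/2) := hb1int.add hb2int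
  -- pointwise bound
  have hbound : ∀ᵐ t ∂(volume.restrict (Set.uIoc (0:ℝ) (1/2))),
      ‖f t + f (-t)‖ ≤ b₁ t + b₂ t := by
    filter_upwards [ae_restrict_mem measurableSet_uIoc] with t ht
    rw [Set.uIoc_of_le (by norm_num : (0:ℝ) ≤ 1/2)] at ht
    obtain ⟨ht0, ht2⟩ := ht
    have hdec : f t + f (-t)
        = ((1/(Complex.I*ε - d*t) + 1/(Complex.I*ε - d*(-t:ℝ))) : ℂ)
          + ((Complex.exp (Complex.I*t*x₁) - 1)/(Complex.I*ε - d*t)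
             + (Complex.exp (Complex.I*(-t:ℝ)*x₁) - 1)/(Complex.I*ε - d*(-t:ℝ))) := by
      simp only [hfdef]
      ring
    rw [hdec]
    refine (norm_add_le _ _).trans ?_
    apply add_le_add
    · exact le_of_eq (aux_A ε d hε t (hK t) (hK (-t)))
    · refine (norm_add_le _ _).trans ?_
      have h1 := aux_h ε d x₁ hε hd t t ht0 (abs_of_pos ht0)
      have h2 := aux_h ε d x₁ hε hd t (-t) ht0 (by rw [abs_neg, abs_of_pos ht0])
      calc ‖((Complex.exp (Complex.I*t*x₁) - 1)/(Complex.I*ε - d*t) : ℂ)‖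
            + ‖((Complex.exp (Complex.I*(-t:ℝ)*x₁) - 1)/(Complex.I*ε - d*(-t:ℝ)) : ℂ)‖
          ≤ 4/|d| * (M/(1+t*M)) + 4/|d| * (M/(1+t*M)) := add_le_add h1 h2
        _ = b₂ t := by simp only [hb2def]; ring
  -- assemble
  have hfold : (∫ α in (-(1/2) : ℝ)..(1/2),
      Complex.exp (Complex.I * α * x₁) / (Complex.I * ε - d * α))
      = ∫ α in (0:ℝ)..(1/2), (f α + f (-α)) := aux_fold f hfc
  rw [hfold]
  have key := intervalIntegral.norm_integral_le_abs_of_norm_le hbound hbint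
  have hsplit : (∫ α in (0:ℝ)..(1/2), (b₁ α + b₂ α))
      = (∫ α in (0:ℝ)..(1/2), b₁ α) + ∫ α in (0:ℝ)..(1/2), b₂ α :=
    intervalIntegral.integral_add hb1int hb2int
  have hI1 : (∫ α in (0:ℝ)..(1/2), b₁ α) ≤ π/|d| := aux_arctan ε d hε hd
  have hI1' : 0 ≤ ∫ α in (0:ℝ)..(1/2), b₁ α := by
    apply intervalIntegral.integral_nonneg (by norm_num)
    intro u hu; simp only [hb1def]; positivity
  have hI2 : (∫ α in (0:ℝ)..(1/2), b₂ α) ≤ 8/|d| * (1 + Real.log M) := by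
    have heq : (∫ α in (0:ℝ)..(1/2), b₂ α)
        = 8/|d| * ∫ α in (0:ℝ)..(1/2), M/(1+α*M) := by
      simp only [hb2def]
      exact intervalIntegral.integral_const_mul _ _
    rw [heq]
    exact mul_le_mul_of_nonneg_left (aux_log M hM) (by positivity)
  have hI2' : 0 ≤ ∫ α in (0:ℝ)..(1/2), b₂ α := by
    apply intervalIntegral.integral_nonneg (by norm_num)
    intro u hu
    simp only [hb2def]
    have := hposM u (by rw [Set.uIcc_of_le (by norm_num)]; exact hu)
    positivity
  have habs_int : |∫ α in (0:ℝ)..(1/2), (b₁ α + b₂ α)| ≤ π/|d| + 8/|d| * (1 + Real.log M) := by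
    rw [hsplit, _root_.abs_of_nonneg (by linarith)]
    linarith
  have hfinal : π/|d| + 8/|d| * (1 + Real.log M) ≤ 12 * (1/|d|) * (1 + Real.log M) := by
    have h4 : π ≤ 4 := by nlinarith [Real.pi_le_four]
    rw [div_eq_mul_one_div π |d|, div_eq_mul_one_div 8 |d|]
    have hu : 0 < 1/|d| := by positivity
    nlinarith [hu, hL, h4]
  have h2nn : 0 ≤ (2 / |d|) * (1 + Real.log M) := by positivity
  calc ‖∫ α in (0:ℝ)..(1/2), (f α + f (-α))‖
      ≤ |∫ α in (0:ℝ)..(1/2), (b₁ α + b₂ α)| := key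
    _ ≤ π/|d| + 8/|d| * (1 + Real.log M) := habs_int
    _ ≤ 12 * (1/|d|) * (1 + Real.log M) := hfinal
    _ ≤ 12 * (1 / |d|) * (1 + Real.log (|x₁| + 1))
          + (2 / |d|) * (1 + Real.log (|x₁| + 1)) := by
        rw [← hMdef]; linarith
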